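/- With the multi-band setup below, assume det F ≠ 0, and define for each l : Fin N the vector χ_l := (Real.sqrt (λ l))⁻¹ • (∑_n ∑_m (conj(U l n) * conj(F n m)) • ψ' m). Then for every x ∈ E, ∑_l ⟪χ_l, x⟫ • χ_l = ∑_m ⟪ψ' m, x⟫ • ψ' m. (At α = 1 the projector onto the path states equals the projector onto the valence bands of insulator II, so the ground state of H(1) coincides with that of insulator II.) -/

import Mathlib

open scoped InnerProductSpace ComplexConjugate Matrix

/-- At `α = 1` the projector onto the path states
`χ_l := (√(λ l))⁻¹ • (∑ n, ∑ m, (conj(U l n) conj(F n m)) • ψ' m)` equals the projector onto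
the valence bands of insulator II: `∑ l, ⟪χ_l, x⟫ • χ_l = ∑ m, ⟪ψ' m, x⟫ • ψ' m`. -/
theorem endpoint_projector_eq {E : Type*} [NormedAddCommGroup E] [InnerProductSpace ℂ E]
    {N : ℕ} (hN : 1 ≤ N) (ψ ψ' : Fin N → E)
    (hψ : Orthonormal ℂ ψ) (hψ' : Orthonormal ℂ ψ')
    (F U : Matrix (Fin N) (Fin N) ℂ)
    (hF : ∀ n m, F n m = ⟪ψ n, ψ' m⟫_ℂ)
    (hU : U ∈ Matrix.unitaryGroup (Fin N) ℂ)
    (lam : Fin N → ℝ)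
    (hdiag : U * F * Fᴴ * Uᴴ = Matrix.diagonal (fun l => (lam l : ℂ)))
    (hdet : F.det ≠ 0)
    (χ : Fin N → E)
    (hχ : ∀ l, χ l =
      (((Real.sqrt (lam l))⁻¹ : ℝ) : ℂ) •
        (∑ n, ∑ m, (conj (U l n) * conj (F n m)) • ψ' m)) :
    ∀ x : E, ∑ l, ⟪χ l, x⟫_ℂ • χ l = ∑ m, ⟪ψ' m, x⟫_ℂ • ψ' m := by
  intro x
  obtain ⟨M, hMdef⟩ : ∃ M : Matrix (Fin N) (Fin N) ℂ, M = U * F := ⟨U * F, rfl⟩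
  have hMH : Mᴴ = Fᴴ * Uᴴ := by rw [hMdef, Matrix.conjTranspose_mul]
  have hMM : M * Mᴴ = Matrix.diagonal (fun l => (lam l : ℂ)) := by
    rw [hMH, hMdef, ← Matrix.mul_assoc]
    exact hdiag
  -- det M ≠ 0
  have hUdet : U.det ≠ 0 := by
    have h1 : U * star U = 1 := (Matrix.mem_unitaryGroup_iff).mp hU
    have := congrArg Matrix.det h1
    rw [Matrix.det_mul, Matrix.det_one] at this
    intro h; rw [h, zero_mul] at this; exact zero_ne_one this
  have hMdet : M.det ≠ 0 := by
    rw [hMdef, Matrix.det_mul]; exact mul_ne_zero hUdet hdet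
  have hMHdet : Mᴴ.det ≠ 0 := by
    rw [Matrix.det_conjTranspose]
    simpa using hMdet
  -- each lam l is nonzero
  have hlam_ne : ∀ l, (lam l : ℂ) ≠ 0 := by
    have hprod : ∏ l, (lam l : ℂ) ≠ 0 := by
      have := congrArg Matrix.det hMM
      rw [Matrix.det_mul, Matrix.det_diagonal] at this
      rw [← this]
      exact mul_ne_zero hMdet hMHdet
    intro l
    exact fun h => hprod (Finset.prod_eq_zero (Finset.mem_univ l) h)
  -- lam l is sum of normSq, hence nonneg
  have hlam_eq : ∀ l, lam l = ∑ j, Complex.normSq (M l j) := by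
    intro l
    have h := congrFun (congrFun hMM l) l
    rw [Matrix.diagonal_apply_eq, Matrix.mul_apply] at h
    have : (lam l : ℂ) = ((∑ j, Complex.normSq (M l j) : ℝ) : ℂ) := by
      rw [← h]
      push_cast
      refine Finset.sum_congr rfl fun j _ => ?_
      rw [Matrix.conjTranspose_apply]
      exact Complex.mul_conj (M l j)
    exact_mod_cast this
  have hlam_nonneg : ∀ l, 0 ≤ lam l := fun l => by
    rw [hlam_eq l]; exact Finset.sum_nonneg fun j _ => Complex.normSq_nonneg _
  -- sqrt facts
  set r : Fin N → ℝ := fun l => (Real.sqrt (lam l))⁻¹ with hr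
  have hrr : ∀ l, ((r l : ℂ)) * (r l : ℂ) = ((lam l : ℂ))⁻¹ := by
    intro l
    have : r l * r l = (lam l)⁻¹ := by
      rw [hr, ← mul_inv, Real.mul_self_sqrt (hlam_nonneg l)]
    rw [← Complex.ofReal_mul, this, Complex.ofReal_inv]
  -- key matrix identity
  have hkey : Mᴴ * Matrix.diagonal (fun l => ((lam l : ℂ))⁻¹) * M = 1 := by
    have hright : (M * Mᴴ) * Matrix.diagonal (fun l => ((lam l : ℂ))⁻¹) = 1 := by
      rw [hMM, Matrix.diagonal_mul_diagonal]
      have h1 : (fun i => (lam i : ℂ) * ((lam i : ℂ))⁻¹) = fun _ => (1 : ℂ) :=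
        funext fun l => mul_inv_cancel₀ (hlam_ne l)
      rw [h1, Matrix.diagonal_one]
    have hinv : Matrix.diagonal (fun l => ((lam l : ℂ))⁻¹) = (M * Mᴴ)⁻¹ :=
      (Matrix.inv_eq_right_inv hright).symm
    rw [hinv, Matrix.mul_inv_rev, ← Matrix.mul_assoc,
      Matrix.mul_assoc Mᴴ Mᴴ⁻¹ M⁻¹, ← Matrix.mul_assoc,
      Matrix.mul_nonsing_inv Mᴴ (isUnit_iff_ne_zero.mpr hMHdet), Matrix.one_mul]
    exact Matrix.nonsing_inv_mul M (isUnit_iff_ne_zero.mpr hMdet)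
  have hkey' : ∀ m m' : Fin N,
      ∑ l, conj (M l m') * ((lam l : ℂ))⁻¹ * M l m = if m' = m then 1 else 0 := by
    intro m m'
    have h := congrFun (congrFun hkey m') m
    rw [Matrix.mul_apply] at h
    simp only [Matrix.mul_diagonal, Matrix.conjTranspose_apply, Matrix.one_apply] at h
    rw [← h]
    rfl
  -- coefficient form of χ
  set c : Fin N → Fin N → ℂ := fun l m => (r l : ℂ) * conj (M l m) with hc
  have hχ' : ∀ l, χ l = ∑ m, c l m • ψ' m := by
    intro l
    rw [hχ l, Finset.sum_comm, Finset.smul_sum]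
    refine Finset.sum_congr rfl fun m _ => ?_
    rw [← Finset.sum_smul, smul_smul]
    congr 1
    rw [hc]
    simp only [hMdef, Matrix.mul_apply, map_sum, map_mul]
    rfl
  have hinner : ∀ l, ⟪χ l, x⟫_ℂ = ∑ m, conj (c l m) * ⟪ψ' m, x⟫_ℂ := by
    intro l
    rw [hχ' l, sum_inner]
    simp [inner_smul_left]
  calc ∑ l, ⟪χ l, x⟫_ℂ • χ l
      = ∑ l, ∑ m', (⟪χ l, x⟫_ℂ * c l m') • ψ' m' := by
        refine Finset.sum_congr rfl fun l _ => ?_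
        rw [hχ' l, Finset.smul_sum]
        simp [smul_smul]
    _ = ∑ m', (∑ l, ⟪χ l, x⟫_ℂ * c l m') • ψ' m' := by
        rw [Finset.sum_comm]
        exact Finset.sum_congr rfl fun m' _ => (Finset.sum_smul).symm
    _ = ∑ m', ⟪ψ' m', x⟫_ℂ • ψ' m' := by
        refine Finset.sum_congr rfl fun m' _ => ?_
        congr 1
        calc ∑ l, ⟪χ l, x⟫_ℂ * c l m'
            = ∑ l, ∑ m, (conj (c l m) * c l m') * ⟪ψ' m, x⟫_ℂ := by
              refine Finset.sum_congr rfl fun l _ => ?_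
              rw [hinner l, Finset.sum_mul]
              refine Finset.sum_congr rfl fun m _ => ?_
              ring
          _ = ∑ m, (∑ l, conj (c l m) * c l m') * ⟪ψ' m, x⟫_ℂ := by
              rw [Finset.sum_comm]
              exact Finset.sum_congr rfl fun m _ => (Finset.sum_mul _ _ _).symm
          _ = ∑ m, (if m' = m then 1 else 0) * ⟪ψ' m, x⟫_ℂ := by
              refine Finset.sum_congr rfl fun m _ => ?_
              congr 1
              rw [← hkey' m m']
              refine Finset.sum_congr rfl fun l _ => ?_
              rw [hc]
              simp only [map_mul, Complex.conj_conj, Complex.conj_ofReal]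
              rw [← hrr l]
              ring
          _ = ⟪ψ' m', x⟫_ℂ := by simp
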